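/- The submodularity ratio γ₁ from the elementwise definition (γ·ρ_ω(S∪U) ≤ ρ_ω(S) for all S,U,ω) is at most the submodularity ratio γ₂ from the sum definition (γ·ρ_U(S) ≤ Σ_{ω∈U\S} ρ_ω(S) for all S,U), for any nondecreasing set function f. -/
import Mathlib


/-- The elementwise submodularity ratio `γ₁` is at most the sum-based
submodularity ratio `γ₂`, for any nondecreasing set function. -/
theorem elementwise_ratio_le_sum_ratio {V : Type*} [Fintype V] [DecidableEq V]
    (f : Finset V → ℝ)
    (hmono : ∀ S₁ S₂ : Finset V, S₁ ⊆ S₂ → f S₁ ≤ f S₂)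
    (γ₁ γ₂ : ℝ) (hγ₁0 : 0 ≤ γ₁) (hγ₂0 : 0 ≤ γ₂)
    (hγ₁ : ∀ (S U : Finset V) (ω : V),
      γ₁ * (f (insert ω (S ∪ U)) - f (S ∪ U)) ≤ f (insert ω S) - f S)
    (hγ₁max : ∀ γ : ℝ, 0 ≤ γ →
      (∀ (S U : Finset V) (ω : V),
        γ * (f (insert ω (S ∪ U)) - f (S ∪ U)) ≤ f (insert ω S) - f S) → γ ≤ γ₁)
    (hγ₂ : ∀ S U : Finset V,
      γ₂ * (f (S ∪ U) - f S) ≤ ∑ ω ∈ U \ S, (f (insert ω S) - f S))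
    (hγ₂max : ∀ γ : ℝ, 0 ≤ γ →
      (∀ S U : Finset V,
        γ * (f (S ∪ U) - f S) ≤ ∑ ω ∈ U \ S, (f (insert ω S) - f S)) → γ ≤ γ₂) :
    γ₁ ≤ γ₂ := by
  apply hγ₂max γ₁ hγ₁0
  intro S U
  induction U using Finset.induction with
  | empty => simp
  | @insert a T ha ih =>
    by_cases haS : a ∈ S
    · have h1 : S ∪ insert a T = S ∪ T := by
        ext x; simp only [Finset.mem_union, Finset.mem_insert]
        constructor
        · rintro (h | rfl | h)
          · exact Or.inl h
          · exact Or.inl haS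
          · exact Or.inr h
        · rintro (h | h)
          · exact Or.inl h
          · exact Or.inr (Or.inr h)
      have h2 : insert a T \ S = T \ S := by
        ext x; simp only [Finset.mem_sdiff, Finset.mem_insert]
        constructor
        · rintro ⟨rfl | h, hx⟩
          · exact absurd haS hx
          · exact ⟨h, hx⟩
        · rintro ⟨h, hx⟩; exact ⟨Or.inr h, hx⟩
      rw [h1, h2]; exact ih
    · have h1 : S ∪ insert a T = insert a (S ∪ T) := by
        ext x; simp only [Finset.mem_union, Finset.mem_insert]; tauto
      have h2 : insert a T \ S = insert a (T \ S) := by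
        ext x; simp only [Finset.mem_sdiff, Finset.mem_insert]
        constructor
        · rintro ⟨rfl | h, hx⟩
          · exact Or.inl rfl
          · exact Or.inr ⟨h, hx⟩
        · rintro (rfl | ⟨h, hx⟩)
          · exact ⟨Or.inl rfl, haS⟩
          · exact ⟨Or.inr h, hx⟩
      have haTS : a ∉ T \ S := fun h => ha (Finset.mem_sdiff.1 h).1
      rw [h1, h2, Finset.sum_insert haTS]
      have key := hγ₁ S T a
      have : γ₁ * (f (insert a (S ∪ T)) - f S)
          = γ₁ * (f (insert a (S ∪ T)) - f (S ∪ T)) + γ₁ * (f (S ∪ T) - f S) := by ring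
      rw [this]
      exact add_le_add key ih
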